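/- Stochastic representation of the univariate skew-normal (Lemma 1, n = 1): let λ ∈ ℝ and δ = λ/√(1+λ²). If X₀ and X₁ are independent random variables, each with the standard normal distribution, then the random variable W = δ·|X₀| + √(1−δ²)·X₁ has law absolutely continuous with respect to Lebesgue measure, with density w ↦ 2·φ(w)·Φ(λ·w). -/

import Mathlib

open MeasureTheory ProbabilityTheory Real

/-- The standard normal density `φ(w) = (2π)^{-1/2} exp(-w²/2)`. -/
noncomputable def stdNormalPDF (w : ℝ) : ℝ := (2 * π) ^ (-(1 : ℝ) / 2) * Real.exp (-w ^ 2 / 2)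

/-- The standard normal distribution function `Φ(x) = ∫_{-∞}^x φ(u) du`. -/
noncomputable def stdNormalCDF (x : ℝ) : ℝ := ∫ u in Set.Iic x, stdNormalPDF u


lemma stdNormalPDF_eq : stdNormalPDF = gaussianPDFReal 0 1 := by
  funext x
  unfold stdNormalPDF gaussianPDFReal
  rw [show (-(1:ℝ)/2) = -(1/2 : ℝ) by norm_num, Real.rpow_neg (by positivity),
    ← Real.sqrt_eq_rpow]
  norm_num

lemma stdNormalPDF_nonneg (x : ℝ) : 0 ≤ stdNormalPDF x := by
  rw [stdNormalPDF_eq]; exact gaussianPDFReal_nonneg _ _ _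

lemma stdNormalCDF_nonneg (x : ℝ) : 0 ≤ stdNormalCDF x :=
  integral_nonneg fun u => stdNormalPDF_nonneg u

lemma gauss_Iic (a : ℝ) : gaussianReal 0 1 (Set.Iic a) = ENNReal.ofReal (stdNormalCDF a) := by
  rw [gaussianReal_apply_eq_integral 0 one_ne_zero, stdNormalCDF, stdNormalPDF_eq]

lemma gauss_neg : (gaussianReal 0 1).map (fun x : ℝ => -x) = gaussianReal 0 1 := by
  rw [show (fun x : ℝ => -x) = ((-1 : ℝ) * ·) by funext x; ring, gaussianReal_map_const_mul]
  norm_num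

lemma gauss_Ioi_neg (a : ℝ) : gaussianReal 0 1 (Set.Ioi (-a)) = ENNReal.ofReal (stdNormalCDF a) := by
  have h1 : gaussianReal 0 1 (Set.Ioi (-a)) = gaussianReal 0 1 (Set.Iio a) := by
    conv_lhs => rw [← gauss_neg]
    rw [Measure.map_apply measurable_neg measurableSet_Ioi]
    congr 1; ext x; simp
  have hsing : gaussianReal 0 1 {a} = 0 :=
    gaussianReal_absolutelyContinuous 0 one_ne_zero (Real.volume_singleton)
  have h2 : gaussianReal 0 1 (Set.Iio a) = gaussianReal 0 1 (Set.Iic a) := by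
    refine le_antisymm (measure_mono Set.Iio_subset_Iic_self) ?_
    calc gaussianReal 0 1 (Set.Iic a) ≤ gaussianReal 0 1 (Set.Iio a) + gaussianReal 0 1 {a} := by
          rw [← Set.Iio_union_right]; exact measure_union_le _ _
      _ = gaussianReal 0 1 (Set.Iio a) := by rw [hsing, add_zero]
  rw [h1, h2, gauss_Iic]

lemma mapA (m c : ℝ) : (gaussianReal 0 1).map (fun y => m + c * y)
    = gaussianReal m (NNReal.mk (c^2) (sq_nonneg c) * 1) := by
  have : (fun y => m + c * y) = (fun z => m + z) ∘ (fun y => c * y) := rfl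
  rw [this, ← Measure.map_map (measurable_const_add m) (measurable_const_mul c)]
  rw [show (fun y => c * y) = (c * ·) from rfl, gaussianReal_map_const_mul c]
  rw [show (fun z => m + z) = (m + ·) from rfl, gaussianReal_map_const_add]
  norm_num

lemma aux_int_Ioi (l δ c : ℝ) (v0 : NNReal) (hc : 0 < c) (hc2 : c^2 = (v0:ℝ)) (hδc : δ = l * c)
    (hv0 : v0 ≠ 0) (w : ℝ) :
    ∫ t in Set.Ioi (0:ℝ), gaussianPDFReal (δ*w) v0 t = stdNormalCDF (l*w) := by
  have hv0' : NNReal.mk (c^2) (sq_nonneg c) * 1 = v0 := by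
    rw [mul_one]; ext; exact hc2
  have hmap : gaussianReal (δ*w) v0 = (gaussianReal 0 1).map (fun y => δ*w + c*y) := by
    rw [mapA, hv0']
  have hpre : (fun y => δ*w + c*y) ⁻¹' (Set.Ioi 0) = Set.Ioi (-(l*w)) := by
    ext u
    simp only [Set.mem_preimage, Set.mem_Ioi]
    rw [hδc]
    constructor
    · intro h; nlinarith
    · intro h; nlinarith
  have key : gaussianReal (δ*w) v0 (Set.Ioi 0) = ENNReal.ofReal (stdNormalCDF (l*w)) := by
    rw [hmap, Measure.map_apply (by fun_prop) measurableSet_Ioi, hpre, gauss_Ioi_neg]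
  rw [gaussianReal_apply_eq_integral _ hv0] at key
  exact (ENNReal.ofReal_eq_ofReal_iff
    (integral_nonneg fun t => gaussianPDFReal_nonneg _ _ _) (stdNormalCDF_nonneg _)).mp key

lemma aux_symm (δ : ℝ) (v0 : NNReal) (hv : (v0:ℝ) = 1 - δ^2) (hv0 : (0:ℝ) < v0) (t w : ℝ) :
    gaussianPDFReal 0 1 t * gaussianPDFReal (δ*t) v0 w
      = gaussianPDFReal 0 1 w * gaussianPDFReal (δ*w) v0 t := by
  unfold gaussianPDFReal
  have e1 : ∀ a b : ℝ, (√(2*π*((1:NNReal):ℝ)))⁻¹ * rexp a * ((√(2*π*((v0:NNReal):ℝ)))⁻¹ * rexp b)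
      = (√(2*π*((1:NNReal):ℝ)))⁻¹ * (√(2*π*((v0:NNReal):ℝ)))⁻¹ * rexp (a+b) := by
    intro a b; rw [Real.exp_add]; ring
  rw [e1, e1]
  congr 1
  have h0 : (v0:ℝ) ≠ 0 := ne_of_gt hv0
  field_simp
  rw [hv]
  simp only [NNReal.coe_one]
  ring_nf

lemma auxB (l δ c : ℝ) (v0 : NNReal) (hv : (v0:ℝ) = 1 - δ^2) (hc : 0 < c)
    (hc2 : c^2 = (v0:ℝ)) (hδc : δ = l*c) (w : ℝ) :
    ∫⁻ x, gaussianPDF 0 1 x * gaussianPDF (δ*|x|) v0 w ∂volume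
      = ENNReal.ofReal (2 * stdNormalPDF w * stdNormalCDF (l*w)) := by
  have hvpos : (0:ℝ) < v0 := hc2 ▸ pow_pos hc 2
  have hv0 : v0 ≠ 0 := by
    intro h; rw [h] at hvpos; simp at hvpos
  set f : ℝ → ℝ := fun x => gaussianPDFReal 0 1 x * gaussianPDFReal (δ*|x|) v0 w with hf
  have hmeas : Measurable f := by
    apply (measurable_gaussianPDFReal 0 1).mul
    unfold gaussianPDFReal
    fun_prop
  have hbound : ∀ x, ‖f x‖ ≤ (√(2*π*v0))⁻¹ * gaussianPDFReal 0 1 x := by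
    intro x
    rw [Real.norm_eq_abs, abs_of_nonneg
      (mul_nonneg (gaussianPDFReal_nonneg _ _ _) (gaussianPDFReal_nonneg _ _ _))]
    rw [mul_comm ((√(2*π*v0))⁻¹)]
    apply mul_le_mul_of_nonneg_left _ (gaussianPDFReal_nonneg _ _ _)
    unfold gaussianPDFReal
    calc (√(2*π*v0))⁻¹ * rexp (-(w - δ*|x|)^2/(2*v0)) ≤ (√(2*π*v0))⁻¹ * 1 := by
          apply mul_le_mul_of_nonneg_left _ (by positivity)
          rw [Real.exp_le_one_iff]
          apply div_nonpos_of_nonpos_of_nonneg (neg_nonpos.mpr (sq_nonneg _)) (by positivity)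
      _ = (√(2*π*v0))⁻¹ := mul_one _
  have hint : Integrable f := by
    refine Integrable.mono' ((integrable_gaussianPDFReal 0 1).const_mul ((√(2*π*v0))⁻¹))
      hmeas.aestronglyMeasurable (ae_of_all _ hbound)
  have h1 : ∀ x, gaussianPDF 0 1 x * gaussianPDF (δ*|x|) v0 w = ENNReal.ofReal (f x) := by
    intro x
    simp only [gaussianPDF]
    rw [ENNReal.ofReal_mul (gaussianPDFReal_nonneg _ _ _)]
  simp_rw [h1]
  rw [← ofReal_integral_eq_lintegral_ofReal hint
    (ae_of_all _ fun x => mul_nonneg (gaussianPDFReal_nonneg _ _ _) (gaussianPDFReal_nonneg _ _ _))]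
  congr 1
  have hfx : ∀ x : ℝ, f x = gaussianPDFReal 0 1 w * gaussianPDFReal (δ*w) v0 |x| := by
    intro x
    have h01 : gaussianPDFReal 0 1 x = gaussianPDFReal 0 1 |x| := by
      unfold gaussianPDFReal
      rw [show (x - 0)^2 = (|x| - 0)^2 by rw [sub_zero, sub_zero, sq_abs]]
    simp only [hf]; rw [h01]
    exact aux_symm δ v0 hv hvpos |x| w
  calc ∫ x, f x = ∫ x, (fun t => gaussianPDFReal 0 1 w * gaussianPDFReal (δ*w) v0 t) |x| := by
        simp_rw [hfx]
    _ = 2 * ∫ t in Set.Ioi (0:ℝ), gaussianPDFReal 0 1 w * gaussianPDFReal (δ*w) v0 t :=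
        integral_comp_abs (f := fun t => gaussianPDFReal 0 1 w * gaussianPDFReal (δ*w) v0 t)
    _ = 2 * (gaussianPDFReal 0 1 w * ∫ t in Set.Ioi (0:ℝ), gaussianPDFReal (δ*w) v0 t) := by
        rw [integral_const_mul]
    _ = 2 * stdNormalPDF w * stdNormalCDF (l*w) := by
        rw [aux_int_Ioi l δ c v0 hc hc2 hδc hv0 w, stdNormalPDF_eq, mul_assoc]

/-- Stochastic representation of the univariate skew-normal (Lemma 1, n = 1):
if `δ = l/√(1+l²)` and `X₀, X₁` are independent standard normal random variables, then
`W = δ·|X₀| + √(1−δ²)·X₁` has density `w ↦ 2·φ(w)·Φ(l·w)` with respect to Lebesgue measure. -/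
theorem skewNormal_stochastic_representation
    {Ω : Type*} [MeasurableSpace Ω] (P : Measure Ω) [IsProbabilityMeasure P]
    (l δ : ℝ) (hδ : δ = l / Real.sqrt (1 + l ^ 2))
    (X₀ X₁ : Ω → ℝ) (hX₀ : Measurable X₀) (hX₁ : Measurable X₁)
    (hindep : IndepFun X₀ X₁ P)
    (hlaw₀ : Measure.map X₀ P = gaussianReal 0 1)
    (hlaw₁ : Measure.map X₁ P = gaussianReal 0 1) :
    Measure.map (fun ω => δ * |X₀ ω| + Real.sqrt (1 - δ ^ 2) * X₁ ω) P =
      volume.withDensity (fun w => ENNReal.ofReal (2 * stdNormalPDF w * stdNormalCDF (l * w))) := by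
  have h1 : (0:ℝ) < 1 + l^2 := by positivity
  have hδ2 : δ^2 = l^2/(1+l^2) := by rw [hδ, div_pow, Real.sq_sqrt h1.le]
  have h1d : 1 - δ^2 = 1/(1+l^2) := by rw [hδ2]; field_simp; ring
  have hvpos : (0:ℝ) < 1 - δ^2 := by rw [h1d]; positivity
  set c := Real.sqrt (1 - δ^2) with hcdef
  have hc : 0 < c := Real.sqrt_pos.mpr hvpos
  have hc2' : c^2 = 1 - δ^2 := Real.sq_sqrt hvpos.le
  have hδc : δ = l * c := by
    rw [hcdef, h1d, one_div, Real.sqrt_inv, hδ, div_eq_mul_inv]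
  set v0 : NNReal := ⟨1 - δ^2, hvpos.le⟩ with hv0def
  have hv : (v0:ℝ) = 1 - δ^2 := rfl
  have hc2 : c^2 = (v0:ℝ) := hc2'
  have hv0 : v0 ≠ 0 := by
    intro h
    have := hv ▸ congrArg (fun x : NNReal => (x:ℝ)) h
    simp at this
    linarith
  set μ := gaussianReal 0 1 with hμdef
  have hpair : Measure.map (fun ω => (X₀ ω, X₁ ω)) P = μ.prod μ := by
    have := (indepFun_iff_map_prod_eq_prod_map_map hX₀.aemeasurable hX₁.aemeasurable).mp hindep
    rw [this, hlaw₀, hlaw₁]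
  set g : ℝ × ℝ → ℝ := fun p => δ * |p.1| + c * p.2 with hgdef
  have hg : Measurable g := by
    apply Measurable.add
    · exact (measurable_fst.abs).const_mul δ
    · exact measurable_snd.const_mul c
  have hWg : (fun ω => δ * |X₀ ω| + c * X₁ ω) = g ∘ (fun ω => (X₀ ω, X₁ ω)) := rfl
  rw [hWg, ← Measure.map_map hg (hX₀.prodMk hX₁), hpair]
  have hmeas_pair : Measurable (fun p : ℝ × ℝ => gaussianPDF 0 1 p.1 * gaussianPDF (δ*|p.1|) v0 p.2) := by
    refine Measurable.mul (f := fun p : ℝ × ℝ => gaussianPDF 0 1 p.1) (g := fun p : ℝ × ℝ => gaussianPDF (δ*|p.1|) v0 p.2) ?_ ?_ <;> unfold gaussianPDF gaussianPDFReal <;> fun_prop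
  ext s hs
  rw [Measure.map_apply hg hs, Measure.prod_apply (hg hs), withDensity_apply _ hs]
  have hslice : ∀ x : ℝ, μ (Prod.mk x ⁻¹' (g ⁻¹' s)) = ∫⁻ w in s, gaussianPDF (δ*|x|) v0 w ∂volume := by
    intro x
    have hps : Prod.mk x ⁻¹' (g ⁻¹' s) = (fun y => δ*|x| + c*y) ⁻¹' s := rfl
    rw [hps, ← Measure.map_apply (by fun_prop) hs, hμdef, mapA (δ*|x|) c,
      show NNReal.mk (c^2) (sq_nonneg c) * 1 = v0 by rw [mul_one]; ext; exact hc2,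
      gaussianReal_apply _ hv0]
  simp_rw [hslice]
  rw [show μ = volume.withDensity (gaussianPDF 0 1) from gaussianReal_of_var_ne_zero 0 one_ne_zero]
  rw [lintegral_withDensity_eq_lintegral_mul volume (measurable_gaussianPDF 0 1)
    (Measurable.lintegral_prod_right' (by unfold gaussianPDF gaussianPDFReal; fun_prop :
      Measurable (fun p : ℝ × ℝ => gaussianPDF (δ*|p.1|) v0 p.2)))]
  simp only [Pi.mul_apply]
  have hpull : ∀ x : ℝ, gaussianPDF 0 1 x * ∫⁻ w in s, gaussianPDF (δ*|x|) v0 w ∂volume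
      = ∫⁻ w in s, gaussianPDF 0 1 x * gaussianPDF (δ*|x|) v0 w ∂volume :=
    fun x => (lintegral_const_mul _ (measurable_gaussianPDF _ _)).symm
  simp_rw [hpull]
  rw [lintegral_lintegral_swap hmeas_pair.aemeasurable]
  exact lintegral_congr fun w => auxB l δ c v0 hv hc hc2 hδc w
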